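/- Let f₀, f₁, …, f_{n-1} be complex valued functions on the unit disc and, for j = 0, …, n-1, define D_j(z) = Σ_{k=0}^{n-1} |z|^{jk} · f_k(z) · (1-|z|²)^n / (1-|z|^{j+2})^k. Then for each 0 ≤ k ≤ n-1 there exist functions b_{jk} on 𝔻, bounded on the annulus 1/2 < |z| < 1, such that f_k(z)·(1-|z|²)^{n-k} = Σ_{j=0}^{n-1} b_{jk}(z)·D_j(z) for all z with 0 < |z| < 1. -/
import Mathlib


open Finset Matrix

/-- The node function: `sNode j x = x^j (1+x) / (1 + x + ... + x^(j+1))`.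
For `x < 1` this equals `x^j (1-x^2)/(1-x^(j+2))`, and it is continuous up to `x = 1`. -/
noncomputable def sNode (j : ℕ) (x : ℝ) : ℝ :=
  x ^ j * (1 + x) / (∑ m ∈ Finset.range (j + 2), x ^ m)

lemma sNode_denom_pos (j : ℕ) {x : ℝ} (hx : 0 ≤ x) :
    0 < ∑ m ∈ Finset.range (j + 2), x ^ m := by
  have h1 : (1 : ℝ) ≤ ∑ m ∈ Finset.range (j + 2), x ^ m := by
    have := Finset.single_le_sum (f := fun m => x ^ m)
      (fun m _ => pow_nonneg hx m) (Finset.mem_range.mpr (by omega : 0 < j + 2))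
    simpa using this
  linarith

lemma sNode_eq (j : ℕ) {x : ℝ} (hx0 : 0 ≤ x) (hx1 : x < 1) :
    sNode j x = x ^ j * (1 - x ^ 2) / (1 - x ^ (j + 2)) := by
  have hgeo : (1 - x) * ∑ m ∈ Finset.range (j + 2), x ^ m = 1 - x ^ (j + 2) := by
    have := geom_sum_mul x (j + 2)
    ring_nf
    ring_nf at this
    linarith
  have hd := sNode_denom_pos j hx0
  have hx1' : (1 : ℝ) - x ≠ 0 := by linarith
  have hne : (1 : ℝ) - x ^ (j + 2) ≠ 0 := by
    rw [← hgeo]; exact mul_ne_zero hx1' (ne_of_gt hd)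
  rw [sNode, ← hgeo]
  field_simp
  ring

lemma sNode_strict_succ {x : ℝ} (hx : 0 < x) (j : ℕ) :
    sNode (j + 1) x < sNode j x := by
  have hd1 := sNode_denom_pos j hx.le
  have hd2 := sNode_denom_pos (j + 1) hx.le
  rw [sNode, sNode, div_lt_div_iff₀ hd2 hd1]
  have hsum : ∑ m ∈ Finset.range (j + 3), x ^ m
      = 1 + x * ∑ m ∈ Finset.range (j + 2), x ^ m := by
    rw [Finset.mul_sum]
    rw [Finset.sum_range_succ' (fun m => x ^ m) (j + 2)]
    simp [← pow_succ']
    ring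
  have hp : 0 < x ^ j * (1 + x) := by positivity
  calc x ^ (j + 1) * (1 + x) * ∑ m ∈ Finset.range (j + 2), x ^ m
      = x ^ j * (1 + x) * (x * ∑ m ∈ Finset.range (j + 2), x ^ m) := by ring
    _ < x ^ j * (1 + x) * (1 + x * ∑ m ∈ Finset.range (j + 2), x ^ m) := by
        apply mul_lt_mul_of_pos_left _ hp
        linarith
    _ = x ^ j * (1 + x) * ∑ m ∈ Finset.range (j + 3), x ^ m := by rw [hsum]

lemma sNode_strictAnti {x : ℝ} (hx : 0 < x) : StrictAnti (fun j => sNode j x) :=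
  strictAnti_nat_of_succ_lt (sNode_strict_succ hx)

/-- The Vandermonde matrix of the nodes. -/
noncomputable def Wm (n : ℕ) (x : ℝ) : Matrix (Fin n) (Fin n) ℂ :=
  Matrix.vandermonde (fun j => ((sNode (j : ℕ) x : ℝ) : ℂ))

lemma Wm_det_ne_zero (n : ℕ) {x : ℝ} (hx : 0 < x) : (Wm n x).det ≠ 0 := by
  rw [Wm, Matrix.det_vandermonde_ne_zero_iff]
  intro a b hab
  have : sNode (a : ℕ) x = sNode (b : ℕ) x := Complex.ofReal_inj.mp hab
  exact Fin.val_injective ((sNode_strictAnti hx).injective this)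

lemma sNode_continuous (j : ℕ) : Continuous (fun z : ℂ => sNode j ‖z‖) := by
  apply Continuous.div
  · fun_prop
  · fun_prop
  · intro z
    exact ne_of_gt (sNode_denom_pos j (norm_nonneg z))

lemma Wm_continuous (n : ℕ) : Continuous (fun z : ℂ => Wm n ‖z‖) := by
  apply continuous_matrix
  intro i j
  exact ((Complex.continuous_ofReal.comp (sNode_continuous i)).pow _)

theorem linear_system_lemma (n : ℕ) (hn : 1 ≤ n) (f : Fin n → ℂ → ℂ) (k : Fin n) :
    ∃ b : Fin n → ℂ → ℂ,
      (∀ j : Fin n, ∃ M : ℝ, ∀ z : ℂ, 1 / 2 < ‖z‖ → ‖z‖ < 1 → ‖b j z‖ ≤ M) ∧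
      ∀ z : ℂ, 0 < ‖z‖ → ‖z‖ < 1 →
        f k z * ((1 - ‖z‖ ^ 2 : ℝ) : ℂ) ^ (n - (k : ℕ)) =
          ∑ j : Fin n, b j z *
            ∑ i : Fin n,
              ((‖z‖ ^ ((j : ℕ) * (i : ℕ)) * (1 - ‖z‖ ^ 2) ^ n /
                (1 - ‖z‖ ^ ((j : ℕ) + 2)) ^ (i : ℕ) : ℝ) : ℂ) * f i z := by
  refine ⟨fun j z => (Wm n ‖z‖)⁻¹ k j, ?_, ?_⟩
  · -- boundedness on the annulus via compactness
    intro j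
    set K : Set ℂ := Metric.closedBall (0 : ℂ) 1 ∩ {z : ℂ | 1 / 2 ≤ ‖z‖} with hKdef
    have hK : IsCompact K :=
      (isCompact_closedBall (0 : ℂ) 1).inter_right
        (isClosed_le continuous_const continuous_norm)
    have hdet : ∀ z ∈ K, (Wm n ‖z‖).det ≠ 0 := by
      intro z hz
      exact Wm_det_ne_zero n (lt_of_lt_of_le (by norm_num) hz.2)
    have hcont : ContinuousOn (fun z : ℂ => (Wm n ‖z‖)⁻¹ k j) K := by
      have heq : ∀ z : ℂ, (Wm n ‖z‖)⁻¹ k j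
          = ((Wm n ‖z‖).det)⁻¹ * (Wm n ‖z‖).adjugate k j := by
        intro z
        rw [Matrix.inv_def, Matrix.smul_apply, Ring.inverse_eq_inv', smul_eq_mul]
      simp only [heq]
      apply ContinuousOn.mul
      · exact ContinuousOn.inv₀ ((Wm_continuous n).matrix_det.continuousOn) hdet
      · exact ((Wm_continuous n).matrix_adjugate.matrix_elem k j).continuousOn
    obtain ⟨M, hM⟩ := hK.exists_bound_of_continuousOn hcont
    refine ⟨M, fun z h1 h2 => ?_⟩
    exact hM z ⟨Metric.mem_closedBall.mpr (by simpa using h2.le), le_of_lt h1⟩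
  · -- the linear-algebra identity
    intro z h0 h1
    set x : ℝ := ‖z‖ with hx
    have hx0 : 0 ≤ x := norm_nonneg z
    have hxlt : ∀ j : ℕ, x ^ (j + 2) < 1 := fun j =>
      pow_lt_one₀ hx0 h1 (by omega)
    have hne : ∀ j : ℕ, (1 : ℝ) - x ^ (j + 2) ≠ 0 := fun j => by
      have := hxlt j; linarith
    set g : Fin n → ℂ := fun i => ((1 - x ^ 2 : ℝ) : ℂ) ^ (n - (i : ℕ)) * f i z with hg
    have hdet : IsUnit (Wm n x).det := (Ne.isUnit (Wm_det_ne_zero n h0))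
    -- inner sums are (Wm n x) *ᵥ g
    have hinner : ∀ j : Fin n,
        (∑ i : Fin n,
            ((x ^ ((j : ℕ) * (i : ℕ)) * (1 - x ^ 2) ^ n /
              (1 - x ^ ((j : ℕ) + 2)) ^ (i : ℕ) : ℝ) : ℂ) * f i z)
        = ((Wm n x) *ᵥ g) j := by
      intro j
      rw [Matrix.mulVec, dotProduct]
      apply Finset.sum_congr rfl
      intro i _
      have hreal : x ^ ((j : ℕ) * (i : ℕ)) * (1 - x ^ 2) ^ n /
          (1 - x ^ ((j : ℕ) + 2)) ^ (i : ℕ)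
          = sNode (j : ℕ) x ^ (i : ℕ) * (1 - x ^ 2) ^ (n - (i : ℕ)) := by
        rw [sNode_eq _ hx0 h1]
        rw [div_pow, mul_pow, ← pow_mul]
        have hn' : (i : ℕ) + (n - (i : ℕ)) = n := by
          have := i.isLt; omega
        rw [div_mul_eq_mul_div]
        congr 1
        rw [mul_assoc, ← pow_add, hn']
      rw [hreal, Wm, Matrix.vandermonde]
      simp only [Matrix.of_apply, hg]
      push_cast
      ring
    calc f k z * ((1 - x ^ 2 : ℝ) : ℂ) ^ (n - (k : ℕ))
        = g k := by rw [hg]; ring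
      _ = ((1 : Matrix (Fin n) (Fin n) ℂ) *ᵥ g) k := by rw [Matrix.one_mulVec]
      _ = (((Wm n x)⁻¹ * (Wm n x)) *ᵥ g) k := by rw [Matrix.nonsing_inv_mul _ hdet]
      _ = ((Wm n x)⁻¹ *ᵥ ((Wm n x) *ᵥ g)) k := by rw [Matrix.mulVec_mulVec]
      _ = ∑ j : Fin n, (Wm n x)⁻¹ k j * ((Wm n x) *ᵥ g) j := by
          rw [Matrix.mulVec, dotProduct]
      _ = _ := by
          apply Finset.sum_congr rfl
          intro j _
          rw [hinner j]
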